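/- Let S ∈ ℝ^{N×s} be the snapshot matrix whose columns are u₁, …, u_s ∈ ℝ^N, and let σ₁ ≥ σ₂ ≥ … ≥ σ_{min(N,s)} ≥ 0 be its singular values (the nonnegative square roots of the eigenvalues of SᵀS, sorted in decreasing order). Then for every linear subspace W ⊆ ℝ^N of dimension at most n, the sum of the squared Euclidean distances of the snapshots to their orthogonal projections onto W satisfies Σ_{i=1}^{s} ‖u_i − P_W u_i‖₂² ≥ Σ_{k=n+1}^{min(N,s)} σ_k², where P_W denotes the orthogonal projection onto W. -/

import Mathlib

open Polynomial in
private lemma pod_charpoly_conj_aux {n R : Type*} [DecidableEq n] [Fintype n] [CommRing R]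
    (U V A : Matrix n n R) (hUV : U * V = 1) :
    (U * A * V).charpoly = A.charpoly := by
  classical
  have h1 : (C : R →+* R[X]).mapMatrix U * (C : R →+* R[X]).mapMatrix V = 1 := by
    rw [← map_mul, hUV, map_one]
  have hcm : Matrix.charmatrix (U * A * V)
      = (C : R →+* R[X]).mapMatrix U * Matrix.charmatrix A * (C : R →+* R[X]).mapMatrix V := by
    rw [Matrix.charmatrix, Matrix.charmatrix, Matrix.mul_sub, Matrix.sub_mul]
    congr 1
    · rw [((Matrix.scalar_commute (X : R[X]) (fun r' => Commute.all _ _)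
        ((C : R →+* R[X]).mapMatrix U)).symm.eq), Matrix.mul_assoc, h1, Matrix.mul_one]
    · rw [← map_mul, ← map_mul]
  unfold Matrix.charpoly
  rw [hcm, Matrix.det_mul, Matrix.det_mul, mul_right_comm, ← Matrix.det_mul, h1,
    Matrix.det_one, one_mul]

open Polynomial in
private lemma pod_hermitian_charpoly_eq {s : ℕ} {A : Matrix (Fin s) (Fin s) ℝ}
    (hA : A.IsHermitian) :
    A.charpoly = ∏ k : Fin s, (X - C (hA.eigenvalues k)) := by
  have hU1 : (hA.eigenvectorUnitary : Matrix (Fin s) (Fin s) ℝ) *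
      star (hA.eigenvectorUnitary : Matrix (Fin s) (Fin s) ℝ) = 1 :=
    Matrix.mem_unitaryGroup_iff.mp hA.eigenvectorUnitary.2
  have h : A.charpoly = (Matrix.diagonal (RCLike.ofReal ∘ hA.eigenvalues)).charpoly := by
    conv_lhs => rw [hA.spectral_theorem]
    exact pod_charpoly_conj_aux _ _ _ hU1
  rw [h, Matrix.charpoly_of_upperTriangular _ (Matrix.blockTriangular_diagonal _)]
  refine Finset.prod_congr rfl fun k _ => ?_
  simp [Matrix.diagonal_apply_eq]

open Polynomial in
private lemma pod_roots_prod_lin {m : ℕ} (f : Fin m → ℝ) :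
    (∏ k : Fin m, (X - C (f k))).roots = Finset.univ.val.map f := by
  have h : (Multiset.map f Finset.univ.val).map (fun a => X - C a)
      = Finset.univ.val.map (fun k => X - C (f k)) := Multiset.map_map _ _ _
  rw [Finset.prod_eq_multiset_prod, ← h, roots_multiset_prod_X_sub_C]

open Polynomial in
private lemma pod_minsum_of_charpoly {s m0 : ℕ} (μ : Fin s → ℝ) (σ2 : Fin m0 → ℝ) (lam : ℝ)
    (hlam : 0 ≤ lam)
    (h : ∏ k : Fin s, (X - C (μ k)) = (∏ k : Fin m0, (X - C (σ2 k))) * X ^ (s - m0)) :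
    ∑ k : Fin s, min (μ k) lam = ∑ k : Fin m0, min (σ2 k) lam := by
  have hp : (∏ k : Fin m0, (X - C (σ2 k))) ≠ 0 :=
    (monic_prod_of_monic _ _ fun k _ => monic_X_sub_C _).ne_zero
  have hq : ((X : ℝ[X]) ^ (s - m0)) ≠ 0 := pow_ne_zero _ X_ne_zero
  have hms : (Finset.univ.val.map μ)
      = (Finset.univ.val.map σ2) + Multiset.replicate (s - m0) 0 := by
    have h2 := congrArg Polynomial.roots h
    rwa [pod_roots_prod_lin, roots_mul (mul_ne_zero hp hq), pod_roots_prod_lin, roots_pow,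
      roots_X, Multiset.nsmul_singleton] at h2
  have h3 := congrArg (fun M : Multiset ℝ => (M.map (fun x => min x lam)).sum) hms
  simpa [Multiset.map_map, Multiset.map_replicate, Multiset.sum_replicate, min_eq_left hlam,
    Finset.sum, Function.comp_def] using h3

open RealInnerProductSpace

set_option maxHeartbeats 1000000 in
open Polynomial in
/-- POD lower bound. Let `S` be the snapshot matrix with columns
`u 1, …, u s` and let `σ 1 ≥ … ≥ σ (min N s) ≥ 0` be its singular values (the
nonnegative square roots of the eigenvalues of `SᵀS` in decreasing order, encoded via
the characteristic polynomial of `SᵀS`). Then for every subspace `W` of dimension at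
most `n`, the total squared projection error of the snapshots onto `W` is at least
`Σ_{k=n+1}^{min(N,s)} σ_k²`. -/
theorem pod_projection_error_lower_bound
    (N s n : ℕ) (u : Fin s → EuclideanSpace ℝ (Fin N))
    (S : Matrix (Fin N) (Fin s) ℝ) (hS : ∀ i j, S i j = u j i)
    (σ : Fin (min N s) → ℝ) (hσnonneg : ∀ k, 0 ≤ σ k) (hσdec : Antitone σ)
    (hσ : (S.transpose * S).charpoly =
      (∏ k : Fin (min N s), (X - C (σ k ^ 2))) * X ^ (s - min N s)) :
    ∀ W : Submodule ℝ (EuclideanSpace ℝ (Fin N)), Module.finrank ℝ W ≤ n →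
      ∑ k ∈ Finset.univ.filter (fun k : Fin (min N s) => n ≤ (k : ℕ)), σ k ^ 2 ≤
        ∑ i : Fin s,
          ‖u i - (Submodule.orthogonalProjection W (u i) : EuclideanSpace ℝ (Fin N))‖ ^ 2 := by
  classical
  intro W hW
  have hErrNonneg : (0:ℝ) ≤ ∑ i : Fin s,
      ‖u i - (Submodule.orthogonalProjection W (u i) : EuclideanSpace ℝ (Fin N))‖ ^ 2 :=
    Finset.sum_nonneg fun i _ => sq_nonneg _
  by_cases hn : n < min N s
  swap
  · have h1 : (Finset.univ.filter (fun k : Fin (min N s) => n ≤ (k : ℕ))) = ∅ := by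
      refine Finset.filter_false_of_mem fun k _ => ?_
      simp only [not_le]
      exact lt_of_lt_of_le k.isLt (not_lt.mp hn)
    rw [h1, Finset.sum_empty]
    exact hErrNonneg
  -- notation
  have hAh : (S.transpose * S).IsHermitian := by
    have h := Matrix.isHermitian_conjTranspose_mul_self S
    rwa [Matrix.conjTranspose_eq_transpose_of_trivial] at h
  set μ : Fin s → ℝ := hAh.eigenvalues with hμdef
  set c : Fin s → EuclideanSpace ℝ (Fin N) :=
    fun k => ∑ i : Fin s, hAh.eigenvectorBasis k i • u i with hcdef
  set lam : ℝ := σ ⟨n, hn⟩ ^ 2 with hlamdef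
  have hlam : 0 ≤ lam := sq_nonneg _
  -- Gram identity
  have hgram : ∀ i i' : Fin s, ⟪u i, u i'⟫ = (S.transpose * S) i i' := by
    intro i i'
    rw [Matrix.mul_apply]
    simp only [Matrix.transpose_apply, PiLp.inner_apply, RCLike.inner_apply, conj_trivial]
    exact Finset.sum_congr rfl fun j _ => by rw [hS j i, hS j i']; ring
  -- inner products of the c k
  have hinner : ∀ j k : Fin s, ⟪c j, c k⟫ = if j = k then μ j else 0 := by
    intro j k
    have hAv := hAh.mulVec_eigenvectorBasis k
    have horth := orthonormal_iff_ite.mp hAh.eigenvectorBasis.orthonormal j k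
    have step1 : ⟪c j, c k⟫
        = ∑ i : Fin s, hAh.eigenvectorBasis j i *
          ((S.transpose * S).mulVec (⇑(hAh.eigenvectorBasis k)) i) := by
      rw [hcdef]
      simp only [sum_inner, inner_sum, real_inner_smul_left, real_inner_smul_right, hgram,
        Matrix.mulVec, dotProduct, Finset.mul_sum]
      rw [Finset.sum_comm]
      refine Finset.sum_congr rfl fun i _ => Finset.sum_congr rfl fun i' _ => ?_
      rw [show (S.transpose * S) i i' = (S.transpose * S) i' i by
        rw [← hAh.apply i i']; simp]
      ring
    rw [step1, hAv]
    have h2 : ∑ i : Fin s, hAh.eigenvectorBasis j i *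
          ((hAh.eigenvalues k • WithLp.ofLp (hAh.eigenvectorBasis k)) i)
        = hAh.eigenvalues k * ⟪hAh.eigenvectorBasis j, hAh.eigenvectorBasis k⟫ := by
      simp only [PiLp.inner_apply, RCLike.inner_apply, conj_trivial, Finset.mul_sum,
        Pi.smul_apply, smul_eq_mul]
      exact Finset.sum_congr rfl fun i _ => by ring
    rw [h2, horth]
    by_cases h : j = k <;> simp [h, hμdef]
  have hnormc : ∀ k : Fin s, ‖c k‖ ^ 2 = μ k := by
    intro k
    have h := hinner k k
    rw [if_pos rfl, real_inner_self_eq_norm_sq] at h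
    exact h
  -- Pythagoras
  have hpyth : ∀ x : EuclideanSpace ℝ (Fin N),
      ‖x - (Submodule.orthogonalProjection W x : EuclideanSpace ℝ (Fin N))‖ ^ 2
        = ‖x‖ ^ 2 - ‖(Submodule.orthogonalProjection W x : EuclideanSpace ℝ (Fin N))‖ ^ 2 := by
    intro x
    have h0 : ⟪(Submodule.orthogonalProjection W x : EuclideanSpace ℝ (Fin N)),
        x - (Submodule.orthogonalProjection W x : EuclideanSpace ℝ (Fin N))⟫ = 0 := by
      rw [real_inner_comm]
      exact Submodule.starProjection_inner_eq_zero x _ (Submodule.coe_mem _)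
    have h1 := norm_add_sq_real (Submodule.orthogonalProjection W x : EuclideanSpace ℝ (Fin N))
      (x - (Submodule.orthogonalProjection W x : EuclideanSpace ℝ (Fin N)))
    rw [add_sub_cancel, h0] at h1
    linarith
  -- frame invariance
  have hVV : ∀ i i' : Fin s, (∑ k, hAh.eigenvectorBasis k i * hAh.eigenvectorBasis k i')
      = if i = i' then (1:ℝ) else 0 := by
    intro i i'
    have h2 := hAh.eigenvectorBasis.sum_inner_mul_inner
      (EuclideanSpace.single i (1:ℝ)) (EuclideanSpace.single i' (1:ℝ))
    simpa [EuclideanSpace.inner_single_left, EuclideanSpace.inner_single_right,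
      EuclideanSpace.single_apply, eq_comm] using h2
  have key : ∀ g : EuclideanSpace ℝ (Fin N) →ₗ[ℝ] EuclideanSpace ℝ (Fin N),
      ∑ k : Fin s, ‖g (c k)‖ ^ 2 = ∑ i : Fin s, ‖g (u i)‖ ^ 2 := by
    intro g
    have hgc : ∀ k, g (c k) = ∑ i : Fin s, hAh.eigenvectorBasis k i • g (u i) := by
      intro k
      rw [hcdef]
      simp [map_sum, map_smul]
    calc ∑ k : Fin s, ‖g (c k)‖ ^ 2
        = ∑ k : Fin s, ∑ i : Fin s, ∑ i' : Fin s, hAh.eigenvectorBasis k i *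
            (hAh.eigenvectorBasis k i' * ⟪g (u i), g (u i')⟫) := by
          refine Finset.sum_congr rfl fun k _ => ?_
          rw [← real_inner_self_eq_norm_sq, hgc]
          simp only [sum_inner, inner_sum, real_inner_smul_left, real_inner_smul_right]
          refine Finset.sum_congr rfl fun i _ => Finset.sum_congr rfl fun i' _ => ?_
          rw [real_inner_comm]
      _ = ∑ i : Fin s, ∑ i' : Fin s, (∑ k : Fin s, hAh.eigenvectorBasis k i *
            hAh.eigenvectorBasis k i') * ⟪g (u i), g (u i')⟫ := by
          rw [Finset.sum_comm]
          refine Finset.sum_congr rfl fun i _ => ?_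
          rw [Finset.sum_comm]
          refine Finset.sum_congr rfl fun i' _ => ?_
          rw [Finset.sum_mul]
          exact Finset.sum_congr rfl fun k _ => by ring
      _ = ∑ i : Fin s, ‖g (u i)‖ ^ 2 := by
          refine Finset.sum_congr rfl fun i _ => ?_
          simp only [hVV, ite_mul, one_mul, zero_mul]
          rw [Finset.sum_ite_eq Finset.univ i (fun i' => ⟪g (u i), g (u i')⟫),
            if_pos (Finset.mem_univ i)]
          exact real_inner_self_eq_norm_sq _
  have hframe : ∑ i : Fin s,
      ‖u i - (Submodule.orthogonalProjection W (u i) : EuclideanSpace ℝ (Fin N))‖ ^ 2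
      = ∑ k : Fin s,
      ‖c k - (Submodule.orthogonalProjection W (c k) : EuclideanSpace ℝ (Fin N))‖ ^ 2 := by
    set f : EuclideanSpace ℝ (Fin N) →ₗ[ℝ] EuclideanSpace ℝ (Fin N) :=
      LinearMap.id - (W.subtype.comp (Submodule.orthogonalProjection W).toLinearMap) with hfdef
    have hfx : ∀ x, f x = x - (Submodule.orthogonalProjection W x : EuclideanSpace ℝ (Fin N)) := by
      intro x; simp [hfdef]
    have h := key f
    simp only [hfx] at h
    exact h.symm
  set q : Fin s → ℝ :=
    fun k => ‖(Submodule.orthogonalProjection W (c k) : EuclideanSpace ℝ (Fin N))‖ ^ 2 with hqdef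
  have hqdef' : ∀ k, q k
      = ‖(Submodule.orthogonalProjection W (c k) : EuclideanSpace ℝ (Fin N))‖ ^ 2 := fun k => rfl
  -- Bessel-type bound
  have hqsum : ∑ k : Fin s, q k ≤ (∑ k : Fin s, max (μ k - lam) 0) + lam * n := by
    set m := Module.finrank ℝ W with hmdef
    set b := stdOrthonormalBasis ℝ W with hbdef
    have hPx : ∀ x : EuclideanSpace ℝ (Fin N),
        ‖(Submodule.orthogonalProjection W x : EuclideanSpace ℝ (Fin N))‖ ^ 2
          = ∑ j : Fin m, ⟪((b j : W) : EuclideanSpace ℝ (Fin N)), x⟫ ^ 2 := by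
      intro x
      have h1 := b.sum_inner_mul_inner (Submodule.orthogonalProjection W x) (Submodule.orthogonalProjection W x)
      have h2 : ∀ j : Fin m, ⟪Submodule.orthogonalProjection W x, b j⟫
          = ⟪((b j : W) : EuclideanSpace ℝ (Fin N)), x⟫ := by
        intro j
        rw [real_inner_comm]
        exact Submodule.inner_orthogonalProjection_eq_of_mem_left (K := W) (b j) x
      have h3 : ∀ j : Fin m, ⟪b j, Submodule.orthogonalProjection W x⟫
          = ⟪((b j : W) : EuclideanSpace ℝ (Fin N)), x⟫ :=
        fun j => Submodule.inner_orthogonalProjection_eq_of_mem_left (K := W) (b j) x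
      calc ‖(Submodule.orthogonalProjection W x : EuclideanSpace ℝ (Fin N))‖ ^ 2
          = ‖Submodule.orthogonalProjection W x‖ ^ 2 := by rw [Submodule.norm_coe]
        _ = ⟪Submodule.orthogonalProjection W x, Submodule.orthogonalProjection W x⟫ :=
            (real_inner_self_eq_norm_sq _).symm
        _ = ∑ j : Fin m, ⟪Submodule.orthogonalProjection W x, b j⟫ * ⟪b j, Submodule.orthogonalProjection W x⟫ :=
            h1.symm
        _ = ∑ j : Fin m, ⟪((b j : W) : EuclideanSpace ℝ (Fin N)), x⟫ ^ 2 := by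
            refine Finset.sum_congr rfl fun j _ => ?_
            rw [h2 j, h3 j]; ring
    set T : Finset (Fin s) := Finset.univ.filter (fun k => c k ≠ 0) with hTdef
    have hTmem : ∀ k : Fin s, k ∈ T ↔ c k ≠ 0 := by intro k; simp [hTdef]
    set y : {k : Fin s // c k ≠ 0} → EuclideanSpace ℝ (Fin N) :=
      fun k => ‖c k.1‖⁻¹ • c k.1 with hydef
    have hcnorm_ne : ∀ k : {k : Fin s // c k ≠ 0}, ‖c k.1‖ ≠ 0 :=
      fun k => norm_ne_zero_iff.mpr k.2
    have hynorm : ∀ k, ‖y k‖ = 1 := by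
      intro k
      rw [hydef]
      simp only [norm_smul, Real.norm_eq_abs, abs_inv, abs_norm]
      exact inv_mul_cancel₀ (hcnorm_ne k)
    have horthy : Orthonormal ℝ y := by
      rw [orthonormal_iff_ite]
      intro k l
      by_cases h : k = l
      · subst h
        rw [if_pos rfl, real_inner_self_eq_norm_sq, hynorm k]
        norm_num
      · have hkl : k.1 ≠ l.1 := fun he => h (Subtype.ext he)
        rw [if_neg h, hydef]
        simp only [real_inner_smul_left, real_inner_smul_right, hinner k.1 l.1, if_neg hkl]
        ring
    set t : {k : Fin s // c k ≠ 0} → ℝ :=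
      fun k => ‖(Submodule.orthogonalProjection W (y k) : EuclideanSpace ℝ (Fin N))‖ ^ 2 with htdef
    have ht0 : ∀ k, 0 ≤ t k := fun k => sq_nonneg _
    have ht1 : ∀ k, t k ≤ 1 := by
      intro k
      have h1 := hpyth (y k)
      have h2 : (0:ℝ) ≤ ‖y k - (Submodule.orthogonalProjection W (y k) : EuclideanSpace ℝ (Fin N))‖ ^ 2 :=
        sq_nonneg _
      have h3 : ‖y k‖ ^ 2 = 1 := by rw [hynorm k]; norm_num
      rw [htdef]
      simp only
      linarith
    have hq_eq : ∀ k : {k : Fin s // c k ≠ 0}, q k.1 = μ k.1 * t k := by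
      intro k
      have hc_eq : c k.1 = ‖c k.1‖ • y k := by
        rw [hydef]; exact (smul_inv_smul₀ (hcnorm_ne k) _).symm
      rw [hqdef' k.1]
      conv_lhs => rw [hc_eq]
      rw [map_smul, Submodule.coe_smul, norm_smul, mul_pow, Real.norm_eq_abs, sq_abs, hnormc]
    have hbessel : ∀ j : Fin m,
        ∑ k : {k : Fin s // c k ≠ 0},
          ⟪y k, ((b j : W) : EuclideanSpace ℝ (Fin N))⟫ ^ 2 ≤ 1 := by
      intro j
      have h := horthy.sum_inner_products_le (s := Finset.univ)
        (((b j : W) : EuclideanSpace ℝ (Fin N)))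
      have hbn : ‖((b j : W) : EuclideanSpace ℝ (Fin N))‖ = 1 := by
        rw [Submodule.norm_coe]; exact b.orthonormal.1 j
      simpa [Real.norm_eq_abs, sq_abs, hbn] using h
    have htsum : ∑ k : {k : Fin s // c k ≠ 0}, t k ≤ (n : ℝ) := by
      have h1 : ∑ k : {k : Fin s // c k ≠ 0}, t k = ∑ j : Fin m,
          ∑ k : {k : Fin s // c k ≠ 0},
            ⟪y k, ((b j : W) : EuclideanSpace ℝ (Fin N))⟫ ^ 2 := by
        rw [Finset.sum_comm]
        refine Finset.sum_congr rfl fun k _ => ?_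
        rw [htdef]
        simp only
        rw [hPx (y k)]
        exact Finset.sum_congr rfl fun j _ => by rw [real_inner_comm]
      rw [h1]
      calc ∑ j : Fin m, ∑ k : {k : Fin s // c k ≠ 0},
            ⟪y k, ((b j : W) : EuclideanSpace ℝ (Fin N))⟫ ^ 2
          ≤ ∑ j : Fin m, (1:ℝ) := Finset.sum_le_sum fun j _ => hbessel j
        _ = (m : ℝ) := by simp
        _ ≤ (n : ℝ) := Nat.cast_le.mpr hW
    have hq_zero : ∀ k : Fin s, k ∉ T → q k = 0 := by
      intro k hk
      rw [hTmem] at hk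
      push_neg at hk
      rw [hqdef' k, hk]
      simp
    have hsum1 : ∑ k : Fin s, q k = ∑ k : {k : Fin s // c k ≠ 0}, q k.1 := by
      rw [← Finset.sum_subtype T hTmem q]
      exact (Finset.sum_subset (Finset.subset_univ T) (fun k _ hk => hq_zero k hk)).symm
    have hperk : ∀ k : {k : Fin s // c k ≠ 0}, q k.1 ≤ max (μ k.1 - lam) 0 + lam * t k := by
      intro k
      have h1 := ht0 k
      have h2 := ht1 k
      have h3 : (μ k.1 - lam) * t k ≤ max (μ k.1 - lam) 0 * t k :=
        mul_le_mul_of_nonneg_right (le_max_left _ _) h1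
      have h4 : max (μ k.1 - lam) 0 * t k ≤ max (μ k.1 - lam) 0 :=
        mul_le_of_le_one_right (le_max_right _ _) h2
      rw [hq_eq k]
      nlinarith
    have hmaxsub : ∑ k : {k : Fin s // c k ≠ 0}, max (μ k.1 - lam) 0
        ≤ ∑ k : Fin s, max (μ k - lam) 0 := by
      rw [← Finset.sum_subtype T hTmem (fun k => max (μ k - lam) 0)]
      exact Finset.sum_le_sum_of_subset_of_nonneg (Finset.subset_univ T)
        (fun k _ _ => le_max_right _ _)
    calc ∑ k : Fin s, q k = ∑ k : {k : Fin s // c k ≠ 0}, q k.1 := hsum1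
      _ ≤ ∑ k : {k : Fin s // c k ≠ 0}, (max (μ k.1 - lam) 0 + lam * t k) :=
          Finset.sum_le_sum fun k _ => hperk k
      _ = ∑ k : {k : Fin s // c k ≠ 0}, max (μ k.1 - lam) 0
          + lam * ∑ k : {k : Fin s // c k ≠ 0}, t k := by
          rw [Finset.sum_add_distrib, Finset.mul_sum]
      _ ≤ (∑ k : Fin s, max (μ k - lam) 0) + lam * n := by
          have := mul_le_mul_of_nonneg_left htsum hlam
          linarith [hmaxsub]
  -- charpoly bookkeeping
  have hminsum : ∑ k : Fin s, min (μ k) lam = ∑ k : Fin (min N s), min (σ k ^ 2) lam := by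
    refine pod_minsum_of_charpoly μ (fun k => σ k ^ 2) lam hlam ?_
    rw [← pod_hermitian_charpoly_eq hAh, hσ]
  have hsplit : ∑ k : Fin (min N s), min (σ k ^ 2) lam
      = lam * n + ∑ k ∈ Finset.univ.filter (fun k : Fin (min N s) => n ≤ (k : ℕ)), σ k ^ 2 := by
    have hcard : (Finset.univ.filter (fun k : Fin (min N s) => ¬ n ≤ (k : ℕ))).card = n := by
      have he : Finset.univ.filter (fun k : Fin (min N s) => ¬ n ≤ (k : ℕ))
          = Finset.map (Fin.castLEEmb hn.le) Finset.univ := by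
        ext k
        simp only [Finset.mem_filter, Finset.mem_univ, true_and, Finset.mem_map, not_le]
        constructor
        · intro hk
          exact ⟨⟨(k : ℕ), hk⟩, by ext; rfl⟩
        · rintro ⟨j, rfl⟩
          exact j.isLt
      rw [he, Finset.card_map, Finset.card_univ, Fintype.card_fin]
    have hset := Finset.sum_filter_add_sum_filter_not Finset.univ
      (fun k : Fin (min N s) => n ≤ (k : ℕ)) (fun k => min (σ k ^ 2) lam)
    have h1 : ∑ k ∈ Finset.univ.filter (fun k : Fin (min N s) => n ≤ (k : ℕ)),
        min (σ k ^ 2) lam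
        = ∑ k ∈ Finset.univ.filter (fun k : Fin (min N s) => n ≤ (k : ℕ)), σ k ^ 2 := by
      refine Finset.sum_congr rfl fun k hk => ?_
      rw [Finset.mem_filter] at hk
      have hle : σ k ≤ σ ⟨n, hn⟩ := hσdec (by rw [Fin.le_def]; exact hk.2)
      rw [hlamdef]
      exact min_eq_left (pow_le_pow_left₀ (hσnonneg k) hle 2)
    have h2 : ∑ k ∈ Finset.univ.filter (fun k : Fin (min N s) => ¬ n ≤ (k : ℕ)),
        min (σ k ^ 2) lam
        = lam * n := by
      rw [Finset.sum_congr rfl (fun k hk => ?_), Finset.sum_const, hcard, nsmul_eq_mul, mul_comm]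
      rw [Finset.mem_filter] at hk
      have hle : σ ⟨n, hn⟩ ≤ σ k := hσdec (by rw [Fin.le_def]; exact le_of_lt (not_le.mp hk.2))
      rw [hlamdef]
      exact min_eq_right (pow_le_pow_left₀ (hσnonneg _) hle 2)
    rw [h1, h2] at hset
    linarith
  -- final chain
  have hmaxmin : ∀ k : Fin s, μ k - max (μ k - lam) 0 = min (μ k) lam := by
    intro k
    rcases le_total (μ k) lam with h | h
    · rw [min_eq_left h, max_eq_right (by linarith)]; ring
    · rw [min_eq_right h, max_eq_left (by linarith)]; ring
  have hchain : ∑ i : Fin s,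
      ‖u i - (Submodule.orthogonalProjection W (u i) : EuclideanSpace ℝ (Fin N))‖ ^ 2
      = ∑ k : Fin s, μ k - ∑ k : Fin s, q k := by
    rw [hframe, ← Finset.sum_sub_distrib]
    refine Finset.sum_congr rfl fun k _ => ?_
    rw [hpyth (c k), hnormc k]
  rw [hchain]
  have h5 : ∑ k : Fin s, min (μ k) lam - lam * n
      ≤ ∑ k : Fin s, μ k - ∑ k : Fin s, q k := by
    have h6 : ∑ k : Fin s, min (μ k) lam
        = ∑ k : Fin s, μ k - ∑ k : Fin s, max (μ k - lam) 0 := by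
      rw [← Finset.sum_sub_distrib]
      exact (Finset.sum_congr rfl fun k _ => hmaxmin k).symm
    rw [h6]
    linarith [hqsum]
  calc ∑ k ∈ Finset.univ.filter (fun k : Fin (min N s) => n ≤ (k : ℕ)), σ k ^ 2
      = ∑ k : Fin s, min (μ k) lam - lam * n := by
        rw [hminsum, hsplit]; ring
    _ ≤ _ := h5
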